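/- Let (Ω, ℙ) carry the multilabel masking model with l labels and propensities p₁,…,p_l ∈ (0,1]. For i ∈ {1,…,l}, define T̃_i := (Y_i / p_i) / (1 + Σ_{j ≠ i} Y_j / p_j). Then 𝔼[T̃_i] ≥ 𝔼[ Y*_i / (1 + Σ_{j ≠ i} Y*_j) ]; i.e., T̃_i is an upper bound in expectation for the normalized true label T*_i = Y*_i / Σ_{j=1}^l Y*_j. -/

import Mathlib

open MeasureTheory ProbabilityTheory

lemma tangent_ineq (s a : ℝ) (hs : 0 ≤ s) (ha : 0 ≤ a) :
    (1 + a)⁻¹ - (s - a) / (1 + a) ^ 2 ≤ (1 + s)⁻¹ := by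
  have h1 : (0:ℝ) < 1 + s := by linarith
  have h2 : (0:ℝ) < 1 + a := by linarith
  have key : (1 + s)⁻¹ - ((1 + a)⁻¹ - (s - a) / (1 + a) ^ 2)
      = (s - a) ^ 2 / ((1 + s) * (1 + a) ^ 2) := by
    field_simp; ring
  linarith [key ▸ div_nonneg (sq_nonneg (s - a)) (by positivity : (0:ℝ) ≤ (1 + s) * (1 + a) ^ 2)]

lemma int_bdd_ae {Ω : Type*} [MeasurableSpace Ω] {P : Measure Ω} [IsFiniteMeasure P]
    {f : Ω → ℝ} (hf : AEStronglyMeasurable f P) {C : ℝ} (h : ∀ᵐ ω ∂P, ‖f ω‖ ≤ C) :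
    Integrable f P := ⟨hf, HasFiniteIntegral.of_bounded h⟩

lemma int_bdd {Ω : Type*} [MeasurableSpace Ω] {P : Measure Ω} [IsFiniteMeasure P]
    {f : Ω → ℝ} (hf : AEStronglyMeasurable f P) {C : ℝ} (h : ∀ ω, ‖f ω‖ ≤ C) :
    Integrable f P := int_bdd_ae hf (Filter.Eventually.of_forall h)

lemma masking_core {Ω : Type*} [MeasurableSpace Ω] (P : Measure Ω) [IsProbabilityMeasure P]
    (l : ℕ) (M : Ω → Fin l → ℝ) (hM : Measurable M)
    (hM01 : ∀ ω i, M ω i = 0 ∨ M ω i = 1)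
    (p : Fin l → ℝ) (hp : ∀ i, p i ∈ Set.Ioc (0 : ℝ) 1)
    (hMindep : iIndepFun (m := fun _ : Fin l => (inferInstance : MeasurableSpace ℝ))
      (fun i ω => M ω i) P)
    (hMp : ∀ i, P {ω | M ω i = 1} = ENNReal.ofReal (p i))
    (i : Fin l) (y : Fin l → ℝ) (hy : ∀ j, y j = 0 ∨ y j = 1) :
    y i / (1 + ∑ j ∈ Finset.univ.erase i, y j)
      ≤ ∫ ω, (M ω i * y i / p i)
          / (1 + ∑ j ∈ Finset.univ.erase i, M ω j * y j / p j) ∂P := by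
  have hMeas : ∀ j, Measurable fun ω => M ω j := fun j => (measurable_pi_apply j).comp hM
  have hM01' : ∀ ω j, 0 ≤ M ω j ∧ M ω j ≤ 1 := fun ω j => by
    rcases hM01 ω j with h | h <;> simp [h]
  have hy01 : ∀ j, 0 ≤ y j ∧ y j ≤ 1 := fun j => by rcases hy j with h | h <;> simp [h]
  set S : Ω → ℝ := fun ω => ∑ j ∈ Finset.univ.erase i, M ω j * y j / p j with hS
  set a : ℝ := ∑ j ∈ Finset.univ.erase i, y j with ha
  have hterm_nonneg : ∀ ω j, 0 ≤ M ω j * y j / p j := fun ω j =>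
    div_nonneg (mul_nonneg (hM01' ω j).1 (hy01 j).1) (hp j).1.le
  have hterm_le : ∀ ω j, M ω j * y j / p j ≤ 1 / p j := fun ω j => by
    gcongr
    · exact (hp j).1.le
    · exact mul_le_one₀ (hM01' ω j).2 (hy01 j).1 (hy01 j).2
  have hS_nonneg : ∀ ω, 0 ≤ S ω := fun ω => Finset.sum_nonneg fun j _ => hterm_nonneg ω j
  have ha_nonneg : 0 ≤ a := Finset.sum_nonneg fun j _ => (hy01 j).1
  have hS_meas : Measurable S := Finset.measurable_sum _ fun j _ => ((hMeas j).mul_const _).div_const _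
  -- expectation of each mask coordinate
  have hEM : ∀ j, ∫ ω, M ω j ∂P = p j := by
    intro j
    have hset : MeasurableSet {ω | M ω j = 1} := by
      have := hMeas j (measurableSet_singleton (1:ℝ))
      simpa [Set.preimage, Set.mem_singleton_iff] using this
    have heq : (fun ω => M ω j) = Set.indicator {ω | M ω j = 1} (fun _ => (1:ℝ)) := by
      funext ω
      rcases hM01 ω j with h | h <;> simp [Set.indicator_apply, Set.mem_setOf_eq, h]
    rw [heq, integral_indicator_const (1:ℝ) hset, measureReal_def, hMp j, ENNReal.toReal_ofReal (hp j).1.le,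
      smul_eq_mul, mul_one]
  have hintM : ∀ j, Integrable (fun ω => M ω j) P :=
    fun j => int_bdd (hMeas j).aestronglyMeasurable (C := 1)
      (fun ω => by rw [Real.norm_eq_abs, abs_le]; constructor <;> linarith [(hM01' ω j).1, (hM01' ω j).2])
  have hEterm : ∀ j, ∫ ω, M ω j * y j / p j ∂P = y j := by
    intro j
    simp_rw [mul_div_assoc]
    rw [integral_mul_const, hEM j]
    rw [mul_comm, div_mul_cancel₀ _ (ne_of_gt (hp j).1)]
  -- expectation of S
  have hintterm : ∀ j, Integrable (fun ω => M ω j * y j / p j) P :=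
    fun j => ((hintM j).mul_const _).div_const _
  have hES : ∫ ω, S ω ∂P = a := by
    rw [hS, ha]
    rw [integral_finset_sum _ fun j _ => hintterm j]
    exact Finset.sum_congr rfl fun j _ => hEterm j
  -- h = (1 + S)⁻¹
  set h : Ω → ℝ := fun ω => (1 + S ω)⁻¹ with hh
  have hh_meas : Measurable h := (measurable_const.add hS_meas).inv
  have hh_pos : ∀ ω, 0 < h ω := fun ω => inv_pos.mpr (by linarith [hS_nonneg ω])
  have hh_le : ∀ ω, h ω ≤ 1 := fun ω => by
    rw [hh]
    simp only
    rw [inv_le_one_iff₀]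
    right; linarith [hS_nonneg ω]
  have hinth : Integrable h P := int_bdd hh_meas.aestronglyMeasurable (C := 1)
    (fun ω => by rw [Real.norm_eq_abs, abs_le]; constructor <;> linarith [(hh_pos ω).le, hh_le ω])
  -- Jensen via tangent line
  have hS_int : Integrable S P := by
    refine int_bdd hS_meas.aestronglyMeasurable (C := ∑ j ∈ Finset.univ.erase i, 1 / p j) ?_
    intro ω
    rw [Real.norm_eq_abs, abs_of_nonneg (hS_nonneg ω)]
    exact Finset.sum_le_sum fun j _ => hterm_le ω j
  have hJensen : (1 + a)⁻¹ ≤ ∫ ω, h ω ∂P := by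
    have hlow : Integrable (fun ω => (1 + a)⁻¹ - (S ω - a) / (1 + a) ^ 2) P :=
      (integrable_const _).sub ((hS_int.sub (integrable_const a)).div_const _)
    have h2 : Integrable (fun ω => (S ω - a) / (1 + a) ^ 2) P :=
      (hS_int.sub (integrable_const a)).div_const _
    have h3 : Integrable (fun ω => S ω - a) P := hS_int.sub (integrable_const a)
    have hlowval : ∫ ω, ((1 + a)⁻¹ - (S ω - a) / (1 + a) ^ 2) ∂P = (1 + a)⁻¹ := by
      rw [integral_sub (integrable_const _) h2, integral_const, integral_div,
        integral_sub hS_int (integrable_const a), hES, integral_const]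
      simp
    calc (1 + a)⁻¹ = ∫ ω, ((1 + a)⁻¹ - (S ω - a) / (1 + a) ^ 2) ∂P := hlowval.symm
      _ ≤ ∫ ω, h ω ∂P :=
        integral_mono hlow hinth fun ω => tangent_ineq (S ω) a (hS_nonneg ω) ha_nonneg
  -- independence of M i and h
  have hdisj : Disjoint ({i} : Finset (Fin l)) (Finset.univ.erase i) := by simp
  have hfin := hMindep.indepFun_finset {i} (Finset.univ.erase i) hdisj hMeas
  set φ : (({i} : Finset (Fin l)) → ℝ) → ℝ :=
    fun v => v ⟨i, Finset.mem_singleton_self i⟩ * y i / p i with hφ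
  set ψ : ({x // x ∈ Finset.univ.erase i} → ℝ) → ℝ :=
    fun v => (1 + ∑ j ∈ (Finset.univ.erase i).attach, v j * y (j : Fin l) / p (j : Fin l))⁻¹ with hψ
  have hφm : Measurable φ := ((measurable_pi_apply _).mul_const _).div_const _
  have hψm : Measurable ψ := by
    apply Measurable.inv
    exact measurable_const.add
      (Finset.measurable_sum _ fun j _ => ((measurable_pi_apply j).mul_const _).div_const _)
  have hI0 := (hfin.comp hφm hψm)
  have hI : IndepFun (fun ω => M ω i * y i / p i) h P := by
    have e1 : (φ ∘ fun ω (j : ({i} : Finset (Fin l))) => M ω (j : Fin l))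
        = fun ω => M ω i * y i / p i := rfl
    have e2 : (ψ ∘ fun ω (j : {x // x ∈ Finset.univ.erase i}) => M ω (j : Fin l)) = h := by
      funext ω
      simp only [Function.comp_apply, hψ, hh, hS]
      rw [Finset.sum_attach (Finset.univ.erase i) (fun j => M ω j * y j / p j)]
    rw [e1, e2] at hI0
    exact hI0
  have hintf1 : Integrable (fun ω => M ω i * y i / p i) P := ((hintM i).mul_const _).div_const _
  have hprod : ∫ ω, (M ω i * y i / p i) * h ω ∂P
      = (∫ ω, M ω i * y i / p i ∂P) * ∫ ω, h ω ∂P :=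
    hI.integral_fun_mul_eq_mul_integral hintf1.aestronglyMeasurable hinth.aestronglyMeasurable
  have hEf1 : ∫ ω, M ω i * y i / p i ∂P = y i := hEterm i
  calc y i / (1 + a) = y i * (1 + a)⁻¹ := div_eq_mul_inv _ _
    _ ≤ y i * ∫ ω, h ω ∂P := mul_le_mul_of_nonneg_left hJensen (hy01 i).1
    _ = ∫ ω, (M ω i * y i / p i) * h ω ∂P := by rw [hprod, hEf1]
    _ = ∫ ω, (M ω i * y i / p i) / (1 + S ω) ∂P := by
        simp_rw [div_eq_mul_inv]
        rfl
    _ = _ := rfl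


/-- **Upper bound in expectation for normalized labels.** Under the multilabel masking model
with `l` labels and propensities `p i ∈ (0,1]`, with `Y = M ⊙ Y*` and
`T̃ᵢ := (Yᵢ/pᵢ)/(1 + Σ_{j ≠ i} Yⱼ/pⱼ)`, one has
`𝔼[T̃ᵢ] ≥ 𝔼[Y*ᵢ/(1 + Σ_{j ≠ i} Y*ⱼ)]`. -/
theorem normalized_label_upper_bound
    {Ω : Type*} [MeasurableSpace Ω] (P : Measure Ω) [IsProbabilityMeasure P]
    {𝒳 : Type*} [MeasurableSpace 𝒳]
    (l : ℕ) (X : Ω → 𝒳) (Ystar M : Ω → Fin l → ℝ)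
    (hX : Measurable X) (hYstar : Measurable Ystar) (hM : Measurable M)
    (hYstar01 : ∀ ω i, Ystar ω i = 0 ∨ Ystar ω i = 1)
    (hM01 : ∀ ω i, M ω i = 0 ∨ M ω i = 1)
    (p : Fin l → ℝ) (hp : ∀ i, p i ∈ Set.Ioc (0 : ℝ) 1)
    (hMindep : iIndepFun (m := fun _ : Fin l => (inferInstance : MeasurableSpace ℝ))
      (fun i ω => M ω i) P)
    (hindep : IndepFun (fun ω => (X ω, Ystar ω)) M P)
    (hMp : ∀ i, P {ω | M ω i = 1} = ENNReal.ofReal (p i))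
    (i : Fin l) :
    ∫ ω, Ystar ω i / (1 + ∑ j ∈ Finset.univ.erase i, Ystar ω j) ∂P
      ≤ ∫ ω, (M ω i * Ystar ω i / p i)
          / (1 + ∑ j ∈ Finset.univ.erase i, M ω j * Ystar ω j / p j) ∂P := by
  -- independence of Ystar and M
  have hindep' : IndepFun Ystar M P := by
    have := hindep.comp (measurable_snd (α := 𝒳) (β := Fin l → ℝ)) measurable_id
    exact this
  set μY := P.map Ystar with hμY
  set μM := P.map M with hμM
  have hmapeq : P.map (fun ω => (Ystar ω, M ω)) = μY.prod μM :=
    (indepFun_iff_map_prod_eq_prod_map_map hYstar.aemeasurable hM.aemeasurable).mp hindep'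
  set F : (Fin l → ℝ) × (Fin l → ℝ) → ℝ :=
    fun z => (z.2 i * z.1 i / p i)
      / (1 + ∑ j ∈ Finset.univ.erase i, z.2 j * z.1 j / p j) with hF
  have hF_meas : Measurable F := by
    apply Measurable.div
    · exact (((measurable_pi_apply i).comp measurable_snd).mul
        ((measurable_pi_apply i).comp measurable_fst)).div_const _
    · exact measurable_const.add (Finset.measurable_sum _ fun j _ =>
        (((measurable_pi_apply j).comp measurable_snd).mul
          ((measurable_pi_apply j).comp measurable_fst)).div_const _)
  set g : (Fin l → ℝ) → ℝ :=
    fun y => y i / (1 + ∑ j ∈ Finset.univ.erase i, y j) with hg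
  have hg_meas : Measurable g :=
    (measurable_pi_apply i).div
      (measurable_const.add (Finset.measurable_sum _ fun j _ => measurable_pi_apply j))
  set A : Set (Fin l → ℝ) := {y | ∀ j, y j = 0 ∨ y j = 1} with hA
  have hA_meas : MeasurableSet A := by
    have : A = ⋂ j, (fun y : Fin l → ℝ => y j) ⁻¹' {0, 1} := by
      ext y; simp [hA, Set.mem_setOf_eq, Set.mem_preimage]
    rw [this]
    exact MeasurableSet.iInter fun j => measurable_pi_apply j (by measurability)
  have hμYA : μY Aᶜ = 0 := by
    rw [hμY, Measure.map_apply hYstar hA_meas.compl]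
    have hempty : Ystar ⁻¹' Aᶜ = ∅ :=
      Set.eq_empty_iff_forall_notMem.mpr fun ω hω => hω fun j => hYstar01 ω j
    rw [hempty, measure_empty]
  have hμMA : μM Aᶜ = 0 := by
    rw [hμM, Measure.map_apply hM hA_meas.compl]
    have hempty : M ⁻¹' Aᶜ = ∅ :=
      Set.eq_empty_iff_forall_notMem.mpr fun ω hω => hω fun j => hM01 ω j
    rw [hempty, measure_empty]
  have haeY : ∀ᵐ y ∂μY, y ∈ A := by
    rw [Filter.eventually_iff, mem_ae_iff]
    simpa using hμYA
  -- bound on F on A ×ˢ A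
  have hFbound : ∀ z ∈ A ×ˢ A, ‖F z‖ ≤ 1 / p i := by
    rintro ⟨y, m⟩ ⟨hyA, hmA⟩
    have hyA' : ∀ j, y j = 0 ∨ y j = 1 := hyA
    have hmA' : ∀ j, m j = 0 ∨ m j = 1 := hmA
    have hy01 : ∀ j, 0 ≤ y j ∧ y j ≤ 1 := fun j => by
      rcases hyA' j with h | h <;> rw [h] <;> norm_num
    have hm01 : ∀ j, 0 ≤ m j ∧ m j ≤ 1 := fun j => by
      rcases hmA' j with h | h <;> rw [h] <;> norm_num
    have hnum0 : 0 ≤ m i * y i / p i :=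
      div_nonneg (mul_nonneg (hm01 i).1 (hy01 i).1) (hp i).1.le
    have hnum1 : m i * y i / p i ≤ 1 / p i := by
      gcongr
      · exact (hp i).1.le
      · exact mul_le_one₀ (hm01 i).2 (hy01 i).1 (hy01 i).2
    have hden : 1 ≤ 1 + ∑ j ∈ Finset.univ.erase i, m j * y j / p j := by
      have : 0 ≤ ∑ j ∈ Finset.univ.erase i, m j * y j / p j :=
        Finset.sum_nonneg fun j _ =>
          div_nonneg (mul_nonneg (hm01 j).1 (hy01 j).1) (hp j).1.le
      linarith
    have hF0 : 0 ≤ F (y, m) := div_nonneg hnum0 (by linarith)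
    have hF1 : F (y, m) ≤ 1 / p i :=
      (div_le_self hnum0 hden).trans hnum1
    rw [Real.norm_eq_abs, abs_of_nonneg hF0]
    exact hF1
  have hprodae : ∀ᵐ z ∂(μY.prod μM), z ∈ A ×ˢ A := by
    rw [Filter.eventually_iff, mem_ae_iff]
    have hsub : {z : (Fin l → ℝ) × (Fin l → ℝ) | z ∈ A ×ˢ A}ᶜ
        ⊆ (Aᶜ ×ˢ (Set.univ : Set (Fin l → ℝ))) ∪ ((Set.univ : Set (Fin l → ℝ)) ×ˢ Aᶜ) := by
      rintro ⟨y, m⟩ hz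
      simp only [Set.mem_compl_iff, Set.mem_setOf_eq, Set.mem_prod, not_and_or] at hz
      rcases hz with h | h
      · exact Or.inl ⟨h, trivial⟩
      · exact Or.inr ⟨trivial, h⟩
    refine measure_mono_null hsub (measure_union_null ?_ ?_)
    · rw [Measure.prod_prod, hμYA, zero_mul]
    · rw [Measure.prod_prod, hμMA, mul_zero]
  have hFint : Integrable F (μY.prod μM) :=
    int_bdd_ae hF_meas.aestronglyMeasurable
      (hprodae.mono fun z hz => hFbound z hz)
  -- rewrite RHS via Fubini
  have hRHS : ∫ ω, (M ω i * Ystar ω i / p i)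
        / (1 + ∑ j ∈ Finset.univ.erase i, M ω j * Ystar ω j / p j) ∂P
      = ∫ y, ∫ m, F (y, m) ∂μM ∂μY := by
    have h1 : ∫ ω, F (Ystar ω, M ω) ∂P = ∫ z, F z ∂(P.map (fun ω => (Ystar ω, M ω))) :=
      (integral_map (hYstar.prodMk hM).aemeasurable hF_meas.aestronglyMeasurable).symm
    have h2 : ∫ z, F z ∂(μY.prod μM) = ∫ y, ∫ m, F (y, m) ∂μM ∂μY :=
      integral_prod F hFint
    calc ∫ ω, (M ω i * Ystar ω i / p i)
        / (1 + ∑ j ∈ Finset.univ.erase i, M ω j * Ystar ω j / p j) ∂P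
        = ∫ ω, F (Ystar ω, M ω) ∂P := rfl
      _ = ∫ z, F z ∂(P.map (fun ω => (Ystar ω, M ω))) := h1
      _ = ∫ z, F z ∂(μY.prod μM) := by rw [hmapeq]
      _ = ∫ y, ∫ m, F (y, m) ∂μM ∂μY := h2
  have hLHS : ∫ ω, Ystar ω i / (1 + ∑ j ∈ Finset.univ.erase i, Ystar ω j) ∂P
      = ∫ y, g y ∂μY :=
    (integral_map hYstar.aemeasurable hg_meas.aestronglyMeasurable).symm
  rw [hLHS, hRHS]
  -- integrability of both sides over μY
  have hg_int : Integrable g μY := by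
    refine int_bdd_ae hg_meas.aestronglyMeasurable (C := 1) (haeY.mono fun y hyA => ?_)
    have hy01 : ∀ j, 0 ≤ y j ∧ y j ≤ 1 := fun j => by rcases hyA j with h | h <;> simp [h]
    have hden : 1 ≤ 1 + ∑ j ∈ Finset.univ.erase i, y j := by
      have : 0 ≤ ∑ j ∈ Finset.univ.erase i, y j :=
        Finset.sum_nonneg fun j _ => (hy01 j).1
      linarith
    have h0 : 0 ≤ g y := div_nonneg (hy01 i).1 (by linarith)
    have h1 : g y ≤ 1 := (div_le_self (hy01 i).1 hden).trans (hy01 i).2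
    rw [Real.norm_eq_abs, abs_of_nonneg h0]
    exact h1
  have hinner_int : Integrable (fun y => ∫ m, F (y, m) ∂μM) μY :=
    hFint.integral_prod_left
  refine integral_mono_ae hg_int hinner_int (haeY.mono fun y hyA => ?_)
  have hcore := masking_core P l M hM hM01 p hp hMindep hMp i y hyA
  have hinner : ∫ m, F (y, m) ∂μM = ∫ ω, F (y, M ω) ∂P := by
    rw [hμM]
    exact integral_map hM.aemeasurable
      (hF_meas.comp (measurable_const.prodMk measurable_id)).aestronglyMeasurable
  exact hcore.trans hinner.ge
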